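/- Let M = (E, ρ) be a binary matroid with |E| = n, rank k = ρ(E) ≥ 1, and minimum distance d. Then n ≥ Σ_{i=0}^{k−1} ⌈d / 2^i⌉ (the Griesmer bound for binary matroids). -/

import Mathlib

open Finset

structure FinMatroid (α : Type*) [DecidableEq α] where
  E : Finset α
  rk : Finset α → ℕ
  rk_le_card : ∀ A, A ⊆ E → rk A ≤ A.card
  rk_mono : ∀ A B, A ⊆ B → B ⊆ E → rk A ≤ rk B
  rk_submod : ∀ A B, A ⊆ E → B ⊆ E → rk (A ∪ B) + rk (A ∩ B) ≤ rk A + rk B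

namespace FinMatroid

variable {α : Type*} [DecidableEq α]

/-- The closure operator `cl(A) = {e ∈ E : ρ(A ∪ {e}) = ρ(A)}`. -/
def cl (M : FinMatroid α) (A : Finset α) : Finset α :=
  M.E.filter fun e => M.rk (insert e A) = M.rk A

/-- The cyclic operator `cyc(A) = {e ∈ A : ρ(A − {e}) = ρ(A)}`. -/
def cyc (M : FinMatroid α) (A : Finset α) : Finset α :=
  A.filter fun e => M.rk (A.erase e) = M.rk A

/-- A flat is a set fixed by the closure operator. -/
def IsFlat (M : FinMatroid α) (F : Finset α) : Prop :=
  F ⊆ M.E ∧ M.cl F = F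

/-- A cyclic set is a set fixed by the cyclic operator. -/
def IsCyclic (M : FinMatroid α) (U : Finset α) : Prop :=
  U ⊆ M.E ∧ M.cyc U = U

/-- A cyclic flat is a set fixed by both the closure and the cyclic operators. -/
def IsCyclicFlat (M : FinMatroid α) (Z : Finset α) : Prop :=
  Z ⊆ M.E ∧ M.cl Z = Z ∧ M.cyc Z = Z

/-- The minor `M|Y/X`: restriction to `Y` followed by contraction of `X`. -/
def minor (M : FinMatroid α) (X Y : Finset α) (hXY : X ⊆ Y) (hY : Y ⊆ M.E) :
    FinMatroid α where
  E := Y \ X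
  rk A := M.rk (A ∪ X) - M.rk X
  rk_le_card := by
    intro A hA
    have hAE : A ⊆ M.E := fun a ha => hY (mem_sdiff.mp (hA ha)).1
    have hXE : X ⊆ M.E := hXY.trans hY
    have h1 := M.rk_submod A X hAE hXE
    have h2 := M.rk_le_card A hAE
    show M.rk (A ∪ X) - M.rk X ≤ A.card
    omega
  rk_mono := by
    intro A B hAB hB
    have hBE : B ⊆ M.E := fun a ha => hY (mem_sdiff.mp (hB ha)).1
    have hBX : B ∪ X ⊆ M.E := union_subset hBE (hXY.trans hY)
    have := M.rk_mono (A ∪ X) (B ∪ X) (union_subset_union hAB Subset.rfl) hBX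
    show M.rk (A ∪ X) - M.rk X ≤ M.rk (B ∪ X) - M.rk X
    omega
  rk_submod := by
    intro A B hA hB
    have hAE : A ⊆ M.E := fun a ha => hY (mem_sdiff.mp (hA ha)).1
    have hBE : B ⊆ M.E := fun a ha => hY (mem_sdiff.mp (hB ha)).1
    have hXE : X ⊆ M.E := hXY.trans hY
    have hAX : A ∪ X ⊆ M.E := union_subset hAE hXE
    have hBX : B ∪ X ⊆ M.E := union_subset hBE hXE
    have hsub := M.rk_submod (A ∪ X) (B ∪ X) hAX hBX
    have e1 : (A ∪ X) ∪ (B ∪ X) = (A ∪ B) ∪ X := by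
      ext x; simp only [mem_union]; tauto
    have e2 : (A ∪ X) ∩ (B ∪ X) = (A ∩ B) ∪ X := by
      ext x; simp only [mem_union, mem_inter]; tauto
    rw [e1, e2] at hsub
    have h1 : M.rk X ≤ M.rk (A ∪ X) := M.rk_mono X _ subset_union_right hAX
    have h2 : M.rk X ≤ M.rk (B ∪ X) := M.rk_mono X _ subset_union_right hBX
    have hIX : (A ∩ B) ∪ X ⊆ M.E := union_subset (inter_subset_left.trans hAE) hXE
    have hUX : (A ∪ B) ∪ X ⊆ M.E := union_subset (union_subset hAE hBE) hXE
    have h3 : M.rk X ≤ M.rk ((A ∩ B) ∪ X) := M.rk_mono X _ subset_union_right hIX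
    have h4 : M.rk X ≤ M.rk ((A ∪ B) ∪ X) := M.rk_mono X _ subset_union_right hUX
    show M.rk ((A ∪ B) ∪ X) - M.rk X + (M.rk ((A ∩ B) ∪ X) - M.rk X) ≤
      (M.rk (A ∪ X) - M.rk X) + (M.rk (B ∪ X) - M.rk X)
    omega

/-- The restriction `M|Y`. -/
def restrict (M : FinMatroid α) (Y : Finset α) (hY : Y ⊆ M.E) : FinMatroid α where
  E := Y
  rk := M.rk
  rk_le_card := fun A hA => M.rk_le_card A (hA.trans hY)
  rk_mono := fun A B hAB hB => M.rk_mono A B hAB (hB.trans hY)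
  rk_submod := fun A B hA hB => M.rk_submod A B (hA.trans hY) (hB.trans hY)

/-- `M` is binary: it is the matroid of linear dependence of a family of
vectors over the field with two elements. -/
def IsBinary (M : FinMatroid α) : Prop :=
  ∃ (m : ℕ) (φ : α → (Fin m → ZMod 2)),
    ∀ A : Finset α, A ⊆ M.E →
      M.rk A = Module.finrank (ZMod 2) (Submodule.span (ZMod 2) (φ '' (A : Set α)))

def Simple (M : FinMatroid α) : Prop :=
  (∀ e ∈ M.E, M.rk {e} = 1) ∧
    ∀ e ∈ M.E, ∀ f ∈ M.E, e ≠ f → M.rk ({e, f} : Finset α) = 2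

def NoIsthmus (M : FinMatroid α) : Prop :=
  ∀ e ∈ M.E, M.rk (M.E.erase e) = M.rk M.E

def IsMinDist (M : FinMatroid α) (d : ℕ) : Prop :=
  (∃ X ⊆ M.E, M.rk (M.E \ X) < M.rk M.E ∧ X.card = d) ∧
    ∀ X ⊆ M.E, M.rk (M.E \ X) < M.rk M.E → d ≤ X.card

def IsAtomCF (M : FinMatroid α) (Z : Finset α) : Prop :=
  M.IsCyclicFlat Z ∧ Z ≠ ∅ ∧ ¬ ∃ Z', M.IsCyclicFlat Z' ∧ ∅ ⊂ Z' ∧ Z' ⊂ Z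

def IsCoatomCF (M : FinMatroid α) (Z : Finset α) : Prop :=
  M.IsCyclicFlat Z ∧ Z ⊂ M.E ∧ ¬ ∃ Z', M.IsCyclicFlat Z' ∧ Z ⊂ Z' ∧ Z' ⊂ M.E

def IsCircuit (M : FinMatroid α) (C : Finset α) : Prop :=
  C ⊆ M.E ∧ M.rk C < C.card ∧ ∀ D ⊂ C, M.rk D = D.card

end FinMatroid



/-- weight of a vector -/
def wt {ι : Type*} [Fintype ι] (c : ι → ZMod 2) : ℕ :=
  (Finset.univ.filter fun i => c i ≠ 0).card

lemma zmod2_ne_zero {a : ZMod 2} (h : a ≠ 0) : a = 1 := by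
  revert h; revert a; decide

lemma card_filter_subtype {ι : Type*} (s : Finset ι) (p : ι → Prop)
    [DecidablePred p] :
    (Finset.univ.filter fun i : {i // i ∈ s} => p i.val).card = (s.filter p).card := by
  apply Finset.card_bij (fun i _ => i.val)
  · intro a ha
    simp only [mem_filter, mem_univ, true_and] at ha
    exact mem_filter.mpr ⟨a.2, ha⟩
  · intro a _ b _ h; exact Subtype.ext h
  · intro b hb
    simp only [mem_filter] at hb
    exact ⟨⟨b, hb.1⟩, by simp [hb.2], rfl⟩

lemma ceil_ceil (d b : ℕ) (hb : 0 < b) :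
    ((d + 1) / 2 + b - 1) / b = (d + 2 * b - 1) / (2 * b) := by
  have h1 : (d + 1) / 2 + b - 1 = (d + 1) / 2 + (b - 1) := by omega
  rw [h1]
  have h3 : (d + 1) / 2 + (b - 1) = (d + 1 + (b - 1) * 2) / 2 := by
    rw [Nat.add_mul_div_right _ _ (by norm_num : (0:ℕ) < 2)]
  rw [h3]
  rw [Nat.div_div_eq_div_mul]
  have : d + 1 + (b - 1) * 2 = d + 2 * b - 1 := by omega
  rw [this, mul_comm 2 b]

universe u

theorem griesmer_code (k : ℕ) : ∀ {ι : Type u} [Fintype ι]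
    (C : Submodule (ZMod 2) (ι → ZMod 2)) (d : ℕ),
    k ≤ Module.finrank (ZMod 2) C →
    (∀ c ∈ C, c ≠ 0 → d ≤ wt c) →
    ∑ i ∈ Finset.range k, (d + 2^i - 1)/2^i ≤ Fintype.card ι := by
  induction k with
  | zero => intro ι _ C d _ _; simp
  | succ k ih =>
    intro ι _ C d hk hdist
    classical
    -- there is a nonzero codeword
    have hCne : ∃ c ∈ C, c ≠ 0 := by
      by_contra h
      push_neg at h
      have : C = ⊥ := by
        ext x; simp only [Submodule.mem_bot]
        constructor
        · intro hx; exact h x hx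
        · rintro rfl; exact C.zero_mem
      rw [this, finrank_bot] at hk; omega
    -- choose a nonzero codeword of minimal weight
    obtain ⟨c0, hc0C, hc0ne⟩ := hCne
    set T : Finset (ι → ZMod 2) := Finset.univ.filter fun x => x ∈ C ∧ x ≠ 0 with hT
    have hTne : T.Nonempty := ⟨c0, by simp [hT, hc0C, hc0ne]⟩
    obtain ⟨c, hcT, hcmin⟩ := T.exists_min_image wt hTne
    simp only [hT, mem_filter, mem_univ, true_and] at hcT
    obtain ⟨hcC, hcne⟩ := hcT
    set w := wt c with hw
    have hdw : d ≤ w := hdist c hcC hcne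
    set S : Finset ι := Finset.univ.filter (fun i => c i ≠ 0) with hS
    have hSw : S.card = w := rfl
    have hwcard : w ≤ Fintype.card ι := by
      rw [← hSw]; exact (card_le_card (subset_univ S)).trans_eq (card_univ)
    -- support facts for c
    have hcS : ∀ i, i ∈ S ↔ c i ≠ 0 := by intro i; simp [hS]
    -- the punctured code
    set ι' := {i : ι // i ∈ Sᶜ} with hι'
    let π : (ι → ZMod 2) →ₗ[ZMod 2] (ι' → ZMod 2) :=
      LinearMap.funLeft (ZMod 2) (ZMod 2) Subtype.val
    have hπ : ∀ (x : ι → ZMod 2) (i : ι'), π x i = x i.val := fun _ _ => rfl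
    let L : C →ₗ[ZMod 2] (ι' → ZMod 2) := π ∘ₗ C.subtype
    -- kernel of L is contained in the span of c
    have hker : ∀ x : C, L x = 0 → (x : ι → ZMod 2) = 0 ∨ (x : ι → ZMod 2) = c := by
      intro x hx
      by_cases hx0 : (x : ι → ZMod 2) = 0
      · exact Or.inl hx0
      right
      have hxC : (x : ι → ZMod 2) ∈ C := x.2
      have hxzero : ∀ i ∈ Sᶜ, (x : ι → ZMod 2) i = 0 := by
        intro i hi
        have := congrFun hx ⟨i, hi⟩
        simpa [L, hπ] using this
      have hxT : (x : ι → ZMod 2) ∈ T := by simp [hT, hxC, hx0]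
      have hwx : w ≤ wt (x : ι → ZMod 2) := hcmin _ hxT
      have hsub : (Finset.univ.filter fun i => (x : ι → ZMod 2) i ≠ 0) ⊆ S := by
        intro i hi
        simp only [mem_filter, mem_univ, true_and] at hi
        by_contra hiS
        exact hi (hxzero i (mem_compl.mpr hiS))
      have heq : (Finset.univ.filter fun i => (x : ι → ZMod 2) i ≠ 0) = S :=
        Finset.eq_of_subset_of_card_le hsub (by rw [hSw]; exact hwx)
      funext i
      by_cases hiS : i ∈ S
      · have hxi : (x : ι → ZMod 2) i ≠ 0 := by
          have := heq ▸ hiS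
          simpa using this
        rw [zmod2_ne_zero hxi, zmod2_ne_zero ((hcS i).mp hiS)]
      · have hxi : (x : ι → ZMod 2) i = 0 := hxzero i (mem_compl.mpr hiS)
        have hci : c i = 0 := by
          by_contra h; exact hiS ((hcS i).mpr h)
        rw [hxi, hci]
    -- rank of punctured code
    have hkerle : Module.finrank (ZMod 2) (LinearMap.ker L) ≤ 1 := by
      have hle : LinearMap.ker L ≤ Submodule.span (ZMod 2) {(⟨c, hcC⟩ : C)} := by
        intro x hx
        rcases hker x (LinearMap.mem_ker.mp hx) with h | h
        · have : x = 0 := Subtype.ext h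
          rw [this]; exact Submodule.zero_mem _
        · have : x = ⟨c, hcC⟩ := Subtype.ext h
          rw [this]; exact Submodule.mem_span_singleton_self _
      calc Module.finrank (ZMod 2) (LinearMap.ker L)
          ≤ Module.finrank (ZMod 2) (Submodule.span (ZMod 2) {(⟨c, hcC⟩ : C)}) :=
            Submodule.finrank_mono hle
        _ ≤ 1 := by
            rw [finrank_span_singleton (by simp [Subtype.ext_iff, hcne] :
              (⟨c, hcC⟩ : C) ≠ 0)]
    have hrank : k ≤ Module.finrank (ZMod 2) (LinearMap.range L) := by
      have := LinearMap.finrank_range_add_finrank_ker L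
      omega
    -- weight splits over S and its complement
    have hsplit : ∀ z : ι → ZMod 2, wt z =
        (S.filter fun i => z i ≠ 0).card + ((Sᶜ).filter fun i => z i ≠ 0).card := by
      intro z
      have hu : Finset.univ.filter (fun i => z i ≠ 0) =
          (S.filter fun i => z i ≠ 0) ∪ ((Sᶜ).filter fun i => z i ≠ 0) := by
        ext i
        simp only [mem_filter, mem_union, mem_univ, true_and, mem_compl]
        tauto
      rw [wt, hu, card_union_of_disjoint
        (disjoint_filter_filter disjoint_compl_right)]
    -- distance of the punctured code
    have hdist' : ∀ y ∈ LinearMap.range L, y ≠ 0 → (d + 1) / 2 ≤ wt y := by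
      intro y hy hyne
      obtain ⟨x, hxy⟩ := hy
      set xv := (x : ι → ZMod 2) with hxv
      have hxC : xv ∈ C := x.2
      have hxne : xv ≠ 0 := by
        intro h
        apply hyne
        rw [← hxy]
        funext i
        show xv i.val = 0
        rw [h]; rfl
      set a := (S.filter fun i => xv i ≠ 0).card with ha
      set b := ((Sᶜ).filter fun i => xv i ≠ 0).card with hb
      have haw : a ≤ w := by rw [← hSw]; exact card_le_card (filter_subset _ _)
      -- wt y = b
      have hwy : wt y = b := by
        rw [← hxy]
        show (Finset.univ.filter fun i : ι' => xv i.val ≠ 0).card = b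
        exact card_filter_subtype Sᶜ (fun i => xv i ≠ 0)
      -- first inequality
      have hxT : xv ∈ T := by simp [hT, hxC, hxne]
      have h1 : w ≤ a + b := by
        have := hcmin xv hxT
        rw [hsplit xv] at this
        omega
      -- second inequality, using x + c
      set zv := xv + c with hzv
      have hzC : zv ∈ C := C.add_mem hxC hcC
      have hzne : zv ≠ 0 := by
        intro h
        have hxc : xv = c := by
          funext i
          have := congrFun h i
          have h2 : ∀ u v : ZMod 2, u + v = 0 → u = v := by decide
          exact h2 _ _ this
        apply hyne
        rw [← hxy]
        funext i
        show xv i.val = 0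
        rw [hxc]
        have : c i.val = 0 := by
          by_contra hc
          exact (mem_compl.mp i.2) ((hcS i.val).mpr hc)
        exact this
      have hzT : zv ∈ T := by simp [hT, hzC, hzne]
      have h2 : w ≤ wt zv := hcmin zv hzT
      -- compute wt zv
      have hzin : (S.filter fun i => zv i ≠ 0).card =
          (S.filter fun i => xv i = 0).card := by
        congr 1
        apply filter_congr
        intro i hi
        have hci : c i = 1 := zmod2_ne_zero ((hcS i).mp hi)
        simp only [hzv, Pi.add_apply, hci]
        have h3 : ∀ u : ZMod 2, (u + 1 ≠ 0) ↔ u = 0 := by decide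
        simp [h3]
      have hzin2 : (S.filter fun i => xv i = 0).card = w - a := by
        have := Finset.card_filter_add_card_filter_not
          (s := S) (p := fun i => xv i ≠ 0)
        have he : (S.filter fun i => ¬ xv i ≠ 0) = S.filter fun i => xv i = 0 := by
          apply filter_congr; intro i _; simp
        rw [he] at this
        rw [hSw] at this
        omega
      have hzout : ((Sᶜ).filter fun i => zv i ≠ 0) =
          ((Sᶜ).filter fun i => xv i ≠ 0) := by
        apply filter_congr
        intro i hi
        have hci : c i = 0 := by
          by_contra hc
          exact (mem_compl.mp hi) ((hcS i).mpr hc)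
        simp [hzv, hci]
      have h2' : w ≤ (w - a) + b := by
        rw [hsplit zv, hzin, hzin2, hzout] at h2
        omega
      have : d ≤ 2 * b := by omega
      omega
    -- apply induction hypothesis
    have hIH := ih (LinearMap.range L) ((d + 1) / 2) hrank hdist'
    have hι'card : Fintype.card ι' = Fintype.card ι - w := by
      exact (Fintype.card_coe Sᶜ).trans (by rw [card_compl, hSw])
    rw [hι'card] at hIH
    -- combine
    rw [Finset.sum_range_succ']
    have hterm : ∀ i, (d + 2^(i+1) - 1)/2^(i+1) = ((d+1)/2 + 2^i - 1)/2^i := by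
      intro i
      rw [pow_succ, mul_comm]
      exact (ceil_ceil d (2^i) (Nat.pow_pos (by norm_num))).symm
    have hsum : ∑ i ∈ Finset.range k, (d + 2^(i+1) - 1)/2^(i+1) ≤
        Fintype.card ι - w := by
      calc ∑ i ∈ Finset.range k, (d + 2^(i+1) - 1)/2^(i+1)
          = ∑ i ∈ Finset.range k, ((d+1)/2 + 2^i - 1)/2^i :=
            Finset.sum_congr rfl fun i _ => hterm i
        _ ≤ Fintype.card ι - w := hIH
    have hf0 : (d + 2^0 - 1)/2^0 = d := by simp
    rw [hf0]
    omega

theorem griesmer_bridge {α : Type*} [DecidableEq α] (E : Finset α) (m : ℕ)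
    (φ : α → (Fin m → ZMod 2)) (rk : Finset α → ℕ)
    (hφ : ∀ A : Finset α, A ⊆ E →
      rk A = Module.finrank (ZMod 2) (Submodule.span (ZMod 2) (φ '' (A : Set α))))
    (d : ℕ)
    (hd : ∀ X ⊆ E, rk (E \ X) < rk E → d ≤ X.card) :
    ∑ i ∈ Finset.range (rk E), (d + 2 ^ i - 1) / 2 ^ i ≤ E.card := by
  classical
  set W : Submodule (ZMod 2) (Fin m → ZMod 2) :=
    Submodule.span (ZMod 2) (φ '' (E : Set α)) with hW
  have hrkE : rk E = Module.finrank (ZMod 2) W := hφ E Finset.Subset.rfl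
  let L : Module.Dual (ZMod 2) (Fin m → ZMod 2) →ₗ[ZMod 2] ({x // x ∈ E} → ZMod 2) :=
    LinearMap.pi fun e => LinearMap.applyₗ (φ e.val)
  have hLapp : ∀ (f : Module.Dual (ZMod 2) (Fin m → ZMod 2)) (e : {x // x ∈ E}),
      L f e = f (φ e.val) := fun _ _ => rfl
  -- kernel of L is the annihilator of W
  have hkerL : LinearMap.ker L = W.dualAnnihilator := by
    ext f
    simp only [LinearMap.mem_ker, Submodule.mem_dualAnnihilator]
    constructor
    · intro h v hv
      have hgen : (φ '' (E : Set α)) ⊆ (LinearMap.ker f : Set _) := by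
        rintro _ ⟨e, he, rfl⟩
        have := congrFun h ⟨e, he⟩
        simpa [hLapp] using this
      exact Submodule.span_le.mpr hgen hv
    · intro h
      funext e
      exact h (φ e.val) (Submodule.subset_span ⟨e.val, e.2, rfl⟩)
  -- rank of the code
  have hrange : Module.finrank (ZMod 2) (LinearMap.range L) = rk E := by
    have h1 := LinearMap.finrank_range_add_finrank_ker L
    rw [hkerL] at h1
    have hVm : Module.finrank (ZMod 2) (Fin m → ZMod 2) = m := by
      simp [Module.finrank_fin_fun]
    have h2 : Module.finrank (ZMod 2) W
        + Module.finrank (ZMod 2) W.dualAnnihilator = m := by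
      have hq : Module.finrank (ZMod 2) ((Fin m → ZMod 2) ⧸ W)
          = Module.finrank (ZMod 2) W.dualAnnihilator :=
        LinearEquiv.finrank_eq (Subspace.quotEquivAnnihilator W)
      have h3 := Submodule.finrank_quotient_add_finrank W
      rw [hVm] at h3
      omega
    have hdual : Module.finrank (ZMod 2)
        (Module.Dual (ZMod 2) (Fin m → ZMod 2)) = m := by
      rw [Subspace.dual_finrank_eq, hVm]
    rw [hdual] at h1
    rw [hrkE]
    omega
  -- minimum distance of the code
  have hdist : ∀ y ∈ LinearMap.range L, y ≠ 0 → d ≤ wt y := by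
    intro y hy hyne
    obtain ⟨f, rfl⟩ := hy
    set X := E.filter fun e => f (φ e) ≠ 0 with hX
    have hXE : X ⊆ E := Finset.filter_subset _ _
    have hwt : wt (L f) = X.card := by
      rw [wt]
      show (Finset.univ.filter fun e : {x // x ∈ E} => f (φ e.val) ≠ 0).card = X.card
      exact card_filter_subtype E (fun e => f (φ e) ≠ 0)
    have hlt : rk (E \ X) < rk E := by
      rw [hφ (E \ X) (Finset.sdiff_subset), hrkE]
      apply Submodule.finrank_lt_finrank_of_lt
      have hle : Submodule.span (ZMod 2) (φ '' ((E \ X : Finset α) : Set α)) ≤ W := by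
        apply Submodule.span_mono
        apply Set.image_mono
        intro e he
        rw [Finset.coe_sdiff] at he
        exact he.1
      have hlef : Submodule.span (ZMod 2) (φ '' ((E \ X : Finset α) : Set α))
          ≤ LinearMap.ker f := by
        rw [Submodule.span_le]
        rintro _ ⟨e, he, rfl⟩
        have he' : e ∈ E ∧ e ∉ X := by
          simpa [Finset.mem_sdiff] using he
        simp only [SetLike.mem_coe, LinearMap.mem_ker]
        by_contra h
        exact he'.2 (Finset.mem_filter.mpr ⟨he'.1, h⟩)
      refine lt_of_le_of_ne hle ?_
      intro heq
      have hex : ∃ e : {x // x ∈ E}, f (φ e.val) ≠ 0 := by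
        by_contra h
        push_neg at h
        apply hyne
        funext e
        rw [hLapp]
        exact h e
      obtain ⟨e, hfe⟩ := hex
      have hmem : φ e.val ∈ W := Submodule.subset_span ⟨e.val, e.2, rfl⟩
      rw [← heq] at hmem
      exact hfe (hlef hmem)
    exact hwt ▸ hd X hXE hlt
  have := griesmer_code (rk E) (LinearMap.range L) d (le_of_eq hrange.symm) hdist
  rwa [Fintype.card_coe] at this


/-- Griesmer bound for binary matroids: If `M` is binary with
`n = |E|`, rank `k ≥ 1` and minimum distance `d`, then
`n ≥ Σ_{i=0}^{k−1} ⌈d / 2^i⌉`. -/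
theorem griesmer_bound {α : Type*} [DecidableEq α] (M : FinMatroid α)
    (hb : M.IsBinary) (hk : 1 ≤ M.rk M.E) (d : ℕ) (hd : M.IsMinDist d) :
    ∑ i ∈ Finset.range (M.rk M.E), (d + 2 ^ i - 1) / 2 ^ i ≤ M.E.card := by
  obtain ⟨m, φ, hφ⟩ := hb
  exact griesmer_bridge M.E m φ M.rk hφ d fun X hX hlt => hd.2 X hX hlt
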